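/- Let f : ℝ → [0,∞) be a continuous, integrable, symmetric probability density (f(−x) = f(x) for all x, ∫_ℝ f = 1), and let a > 0, ω > 0. Define the image-method density f̃(x, t) := t^{-ω}·( f(x·t^{-ω}) − f((2a − x)·t^{-ω}) ) and the survival probability S(t) := ∫_{−∞}^{a} f̃(x, t) dx for t > 0. Then (i) S(t) = 2·∫₀^{a·t^{-ω}} f(y) dy for every t > 0, and (ii) S is differentiable on (0,∞) with −S′(t) = (2aω / t^{ω+1}) · f(a·t^{-ω}); hence the first passage time has density f_T(t) = (2aω / t^{ω+1}) · f(a / t^{ω}). -/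

import Mathlib

open MeasureTheory Set

private lemma image_aux1 {a c : ℝ} (hc : 0 < c) :
    (fun x : ℝ => x * c) '' Set.Iic a = Set.Iic (a * c) := by
  ext y
  constructor
  · rintro ⟨x, hx, rfl⟩
    exact mul_le_mul_of_nonneg_right (Set.mem_Iic.mp hx) hc.le
  · intro hy
    refine ⟨y / c, ?_, by field_simp⟩
    rw [Set.mem_Iic, div_le_iff₀ hc]
    linarith [Set.mem_Iic.mp hy]

private lemma image_aux2 {a b c : ℝ} (hc : 0 < c) :
    (fun x : ℝ => (b - x) * c) '' Set.Iic a = Set.Ici ((b - a) * c) := by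
  ext y
  constructor
  · rintro ⟨x, hx, rfl⟩
    exact mul_le_mul_of_nonneg_right (by linarith [Set.mem_Iic.mp hx]) hc.le
  · intro hy
    have h1 : b - a ≤ y / c := (le_div_iff₀ hc).2 (by linarith [Set.mem_Ici.mp hy])
    refine ⟨b - y / c, by rw [Set.mem_Iic]; linarith, by field_simp; ring⟩

private lemma scale_Iic (g : ℝ → ℝ) (a : ℝ) {c : ℝ} (hc : 0 < c) :
    ∫ x in Set.Iic a, c * g (x * c) = ∫ y in Set.Iic (a * c), g y := by
  have h := integral_image_eq_integral_abs_deriv_smul (measurableSet_Iic (a := a))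
    (f := fun x => x * c) (f' := fun _ => c)
    (fun x _ => (hasDerivAt_mul_const c).hasDerivWithinAt)
    (fun x _ y _ h => by exact mul_right_cancel₀ hc.ne' h) g
  rw [image_aux1 hc] at h
  rw [h]
  simp [abs_of_pos hc, smul_eq_mul]

private lemma scale_refl_Iic (g : ℝ → ℝ) (a b : ℝ) {c : ℝ} (hc : 0 < c) :
    ∫ x in Set.Iic a, c * g ((b - x) * c) = ∫ y in Set.Ici ((b - a) * c), g y := by
  have h := integral_image_eq_integral_abs_deriv_smul (measurableSet_Iic (a := a))
    (f := fun x => (b - x) * c) (f' := fun _ => -c)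
    (fun x _ => by
      have : HasDerivAt (fun x : ℝ => (b - x) * c) (-c) x := by
        simpa using (((hasDerivAt_id x).const_sub b).mul_const c)
      exact this.hasDerivWithinAt)
    (fun x _ y _ h => by
      have h2 := mul_right_cancel₀ hc.ne' h
      linarith) g
  rw [image_aux2 hc] at h
  rw [h]
  simp [abs_of_pos hc, smul_eq_mul]

theorem image_method_survival_and_fpt_density
    (f : ℝ → ℝ) (hfc : Continuous f) (hfi : Integrable f)
    (hfnn : ∀ x, 0 ≤ f x) (hsymm : ∀ x, f (-x) = f x)
    (hnorm : ∫ x, f x = 1)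
    (a ω : ℝ) (ha : 0 < a) (hω : 0 < ω)
    (ftilde : ℝ → ℝ → ℝ)
    (hft : ∀ x t : ℝ, ftilde x t
      = t ^ (-ω) * (f (x * t ^ (-ω)) - f ((2 * a - x) * t ^ (-ω))))
    (S : ℝ → ℝ) (hS : ∀ t, S t = ∫ x in Set.Iio a, ftilde x t) :
    (∀ t : ℝ, 0 < t → S t = 2 * ∫ y in (0 : ℝ)..(a * t ^ (-ω)), f y) ∧
    (∀ t : ℝ, 0 < t →
      HasDerivAt S (-(2 * a * ω / t ^ (ω + 1) * f (a * t ^ (-ω)))) t) := by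
  have key : ∀ t : ℝ, 0 < t → S t = 2 * ∫ y in (0 : ℝ)..(a * t ^ (-ω)), f y := by
    intro t ht
    set c : ℝ := t ^ (-ω) with hcdef
    have hc : 0 < c := Real.rpow_pos_of_pos ht _
    -- integrabilities
    have hint1 : Integrable (fun x => c * f (x * c)) :=
      ((hfi.comp_mul_right' hc.ne').const_mul c)
    have hint2 : Integrable (fun x => c * f ((2 * a - x) * c)) := by
      have h0 : Integrable (fun x => f (x * c)) := hfi.comp_mul_right' hc.ne'
      have h1 : Integrable (fun x => f ((2 * a - x) * c)) := h0.comp_sub_left (2 * a)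
      exact h1.const_mul c
    -- split the integral
    have hsplit : S t
        = (∫ x in Set.Iic a, c * f (x * c)) - ∫ x in Set.Iic a, c * f ((2 * a - x) * c) := by
      rw [hS t]
      rw [setIntegral_congr_set (Iio_ae_eq_Iic (a := a))]
      rw [← integral_sub hint1.integrableOn hint2.integrableOn]
      congr 1
      ext x
      rw [hft]
      ring
    have h1 : (∫ x in Set.Iic a, c * f (x * c)) = ∫ y in Set.Iic (a * c), f y :=
      scale_Iic f a hc
    have h2 : (∫ x in Set.Iic a, c * f ((2 * a - x) * c)) = ∫ y in Set.Ioi (a * c), f y := by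
      rw [scale_refl_Iic f a (2 * a) hc]
      rw [show (2 * a - a) * c = a * c by ring]
      exact (setIntegral_congr_set (Ioi_ae_eq_Ici (a := a * c))).symm
    -- now assemble using symmetry and normalization
    have htot : (∫ y in Set.Iic (a * c), f y) + (∫ y in Set.Ioi (a * c), f y) = 1 := by
      rw [intervalIntegral.integral_Iic_add_Ioi hfi.integrableOn hfi.integrableOn, hnorm]
    have htot0 : (∫ y in Set.Iic (0 : ℝ), f y) + (∫ y in Set.Ioi (0 : ℝ), f y) = 1 := by
      rw [intervalIntegral.integral_Iic_add_Ioi hfi.integrableOn hfi.integrableOn, hnorm]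
    have hhalf : (∫ y in Set.Ioi (0 : ℝ), f y) = ∫ y in Set.Iic (0 : ℝ), f y := by
      have := integral_comp_neg_Ioi (0 : ℝ) f
      rw [neg_zero] at this
      rw [← this]
      exact setIntegral_congr_fun measurableSet_Ioi fun x _ => (hsymm x).symm
    have hFTC : (∫ y in Set.Iic (a * c), f y) - (∫ y in Set.Iic (0 : ℝ), f y)
        = ∫ y in (0 : ℝ)..(a * c), f y :=
      intervalIntegral.integral_Iic_sub_Iic hfi.integrableOn hfi.integrableOn
    rw [hsplit, h1, h2]
    linarith
  refine ⟨key, ?_⟩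
  intro t ht
  have hF : HasDerivAt (fun u : ℝ => ∫ y in (0 : ℝ)..u, f y) (f (a * t ^ (-ω)))
      (a * t ^ (-ω)) := (hfc.integral_hasStrictDerivAt 0 (a * t ^ (-ω))).hasDerivAt
  have hu : HasDerivAt (fun s : ℝ => a * s ^ (-ω)) (a * (-ω * t ^ (-ω - 1))) t :=
    (Real.hasDerivAt_rpow_const (Or.inl ht.ne')).const_mul a
  have hcomp : HasDerivAt (fun s : ℝ => 2 * ∫ y in (0 : ℝ)..(a * s ^ (-ω)), f y)
      (2 * (f (a * t ^ (-ω)) * (a * (-ω * t ^ (-ω - 1))))) t :=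
    by have := (hF.comp t hu).const_mul 2; exact this
  have heq : S =ᶠ[nhds t] fun s : ℝ => 2 * ∫ y in (0 : ℝ)..(a * s ^ (-ω)), f y := by
    filter_upwards [Ioi_mem_nhds ht] with s hs
    exact key s hs
  have hd := hcomp.congr_of_eventuallyEq heq
  have hpow : t ^ (-ω - 1) = (t ^ (ω + 1))⁻¹ := by
    rw [show -ω - 1 = -(ω + 1) by ring, Real.rpow_neg ht.le]
  have hne : t ^ (ω + 1) ≠ 0 := (Real.rpow_pos_of_pos ht _).ne'
  have hval : 2 * (f (a * t ^ (-ω)) * (a * (-ω * t ^ (-ω - 1))))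
      = -(2 * a * ω / t ^ (ω + 1) * f (a * t ^ (-ω))) := by
    rw [hpow]
    field_simp
  exact hval ▸ hd
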